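/- Suppose P_0,...,P_{c-1} ∈ C^{nd×nd} are orthogonal projectors, each block-diagonal with diagonal blocks P_{v,k} ∈ C^{d×d} indexed by the vertices v of a graph G, such that Σ_{k∈[c]} P_k = I_{nd} and Σ_{k∈[c]} P_k (A ⊗ I_d) P_k = 0, where A is the adjacency matrix of G. Then the collection {P_{v,k}} is a quantum c-coloring of G; in particular P_{v,k} P_{w,k} = 0 for every edge vw and every k. -/

import Mathlib

open Matrix BigOperators Kronecker

/-- A quantum `c`-coloring of `G` in dimension `d`. -/
def IsQuantumColoring {n d c : ℕ} (G : SimpleGraph (Fin n))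
    (P : Fin n → Fin c → Matrix (Fin d) (Fin d) ℂ) : Prop :=
  (∀ v k, (P v k).IsHermitian) ∧
  (∀ v k, P v k * P v k = P v k) ∧
  (∀ v, ∑ k, P v k = 1) ∧
  (∀ v w, G.Adj v w → ∀ k, P v k * P w k = 0)

lemma blockEntry {n d c : ℕ} (P : Fin n → Fin c → Matrix (Fin d) (Fin d) ℂ) (k : Fin c)
    (a b : Fin n) (i j : Fin d) :
    (∑ v, Matrix.single v v (1 : ℂ) ⊗ₖ P v k) (a,i) (b,j)
      = if a = b then P a k i j else 0 := by
  simp [Matrix.sum_apply, Matrix.kroneckerMap_apply, Matrix.single, ite_and]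

lemma tripleEntry {n d c : ℕ} (G : SimpleGraph (Fin n)) [DecidableRel G.Adj]
    (P : Fin n → Fin c → Matrix (Fin d) (Fin d) ℂ) (k : Fin c)
    (v w : Fin n) (i j : Fin d) :
    ((∑ u, Matrix.single u u (1 : ℂ) ⊗ₖ P u k) *
        (G.adjMatrix ℂ ⊗ₖ (1 : Matrix (Fin d) (Fin d) ℂ)) *
        (∑ u, Matrix.single u u (1 : ℂ) ⊗ₖ P u k)) (v,i) (w,j)
      = G.adjMatrix ℂ v w * (P v k * P w k) i j := by
  have h3 : ∀ l : Fin d,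
      ((∑ u, Matrix.single u u (1 : ℂ) ⊗ₖ P u k) *
        (G.adjMatrix ℂ ⊗ₖ (1 : Matrix (Fin d) (Fin d) ℂ))) (v,i) (w,l)
        = G.adjMatrix ℂ v w * P v k i l := by
    intro l
    rw [Matrix.mul_apply]
    simp only [Fintype.sum_prod_type]
    have h2 : ∀ (x : Fin n) (m : Fin d),
        (∑ u, Matrix.single u u (1 : ℂ) ⊗ₖ P u k) (v,i) (x,m)
          = if v = x then P v k i m else 0 := fun x m => blockEntry P k v x i m
    simp only [h2, ite_mul, zero_mul, Finset.sum_ite_eq, Finset.mem_univ, if_true,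
      Matrix.kroneckerMap_apply, Matrix.one_apply, mul_ite, mul_zero, mul_one,
      Finset.sum_ite_eq', if_true]
    ring
  rw [Matrix.mul_apply]
  simp only [Fintype.sum_prod_type]
  have h1 : ∀ (x : Fin n) (l : Fin d),
      (∑ u, Matrix.single u u (1 : ℂ) ⊗ₖ P u k) (x,l) (w,j)
        = if x = w then P x k l j else 0 := fun x l => blockEntry P k x w l j
  simp only [h1, mul_ite, mul_zero]
  rw [Finset.sum_comm]
  simp only [Finset.sum_ite_eq', Finset.mem_univ, if_true, h3]
  rw [Matrix.mul_apply, Finset.mul_sum]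
  exact Finset.sum_congr rfl fun l _ => by ring


/-- If the block-diagonal projectors `P_k` form a resolution of the identity and
the associated pinching annihilates `A ⊗ I_d`, then the blocks `P_{v,k}` form a
quantum `c`-coloring of `G`; in particular `P_{v,k} P_{w,k} = 0` on edges. -/
theorem quantum_coloring_of_annihilating_pinching {n d c : ℕ}
    (G : SimpleGraph (Fin n)) [DecidableRel G.Adj]
    (P : Fin n → Fin c → Matrix (Fin d) (Fin d) ℂ)
    (hherm : ∀ v k, (P v k).IsHermitian)
    (hidem : ∀ v k, P v k * P v k = P v k)
    (hsum : ∑ k : Fin c, (∑ v, Matrix.single v v (1 : ℂ) ⊗ₖ P v k) = 1)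
    (hpinch : ∑ k : Fin c,
      (∑ v, Matrix.single v v (1 : ℂ) ⊗ₖ P v k) *
        (G.adjMatrix ℂ ⊗ₖ (1 : Matrix (Fin d) (Fin d) ℂ)) *
        (∑ v, Matrix.single v v (1 : ℂ) ⊗ₖ P v k) = 0) :
    IsQuantumColoring G P ∧
      ∀ v w, G.Adj v w → ∀ k, P v k * P w k = 0 := by
  have hone : ∀ v, ∑ k, P v k = 1 := by
    intro v
    ext i j
    have h := congrFun (congrFun hsum (v, i)) (v, j)
    rw [Matrix.sum_apply] at h
    simp only [blockEntry, if_pos rfl] at h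
    rw [Matrix.sum_apply]
    simpa [Matrix.one_apply, Prod.ext_iff] using h
  have hedge : ∀ v w, G.Adj v w → ∀ k, P v k * P w k = 0 := by
    intro v w hvw
    have hQ : ∑ k, P v k * P w k = 0 := by
      ext i j
      have h := congrFun (congrFun hpinch (v, i)) (w, j)
      rw [Matrix.sum_apply] at h
      simp only [tripleEntry, SimpleGraph.adjMatrix_apply, if_pos hvw, one_mul] at h
      simpa [Matrix.sum_apply] using h
    have key : ∀ k, Matrix.trace (P v k * P w k)
        = ((∑ i, ∑ j, Complex.normSq ((P v k * P w k) i j) : ℝ) : ℂ) := by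
      intro k
      have hMH : (P v k * P w k)ᴴ = P w k * P v k := by
        rw [Matrix.conjTranspose_mul, (hherm v k).eq, (hherm w k).eq]
      have e : P v k * P w k * (P w k * P v k) = P v k * P w k * P v k := by
        rw [mul_assoc (P v k) (P w k), ← mul_assoc (P w k) (P w k), hidem w k,
          ← mul_assoc]
      have h1 : Matrix.trace ((P v k * P w k) * (P v k * P w k)ᴴ)
          = Matrix.trace (P v k * P w k) := by
        rw [hMH, e, Matrix.trace_mul_cycle, hidem v k]
      rw [← h1, Matrix.trace]
      push_cast
      refine Finset.sum_congr rfl fun i _ => ?_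
      rw [Matrix.diag_apply, Matrix.mul_apply]
      refine Finset.sum_congr rfl fun j _ => ?_
      simp [Matrix.conjTranspose_apply, Complex.mul_conj]
    have h0 : (∑ k, ∑ i, ∑ j, Complex.normSq ((P v k * P w k) i j) : ℝ) = 0 := by
      have hc : ((∑ k, ∑ i, ∑ j, Complex.normSq ((P v k * P w k) i j) : ℝ) : ℂ) = 0 := by
        rw [Complex.ofReal_sum]
        calc ∑ k, ((∑ i, ∑ j, Complex.normSq ((P v k * P w k) i j) : ℝ) : ℂ)
            = ∑ k, Matrix.trace (P v k * P w k) :=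
              Finset.sum_congr rfl fun k _ => (key k).symm
          _ = Matrix.trace (∑ k, P v k * P w k) := (Matrix.trace_sum _ _).symm
          _ = 0 := by rw [hQ, Matrix.trace_zero]
      exact_mod_cast hc
    intro k
    ext i j
    have hk := (Finset.sum_eq_zero_iff_of_nonneg (fun k _ =>
      Finset.sum_nonneg fun i _ => Finset.sum_nonneg fun j _ =>
        Complex.normSq_nonneg _)).mp h0 k (Finset.mem_univ k)
    have hij := (Finset.sum_eq_zero_iff_of_nonneg (fun i _ =>
      Finset.sum_nonneg fun j _ => Complex.normSq_nonneg _)).mp hk i (Finset.mem_univ i)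
    have hz := (Finset.sum_eq_zero_iff_of_nonneg (fun j _ =>
      Complex.normSq_nonneg _)).mp hij j (Finset.mem_univ j)
    simpa [Complex.normSq_eq_zero] using hz
  exact ⟨⟨hherm, hidem, hone, hedge⟩, hedge⟩
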